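/- arXiv:1604.02634 — 2 statements merged into one kernel-verified Lean document; each statement's English description precedes it below -/
import Mathlib

section
/- Let f₁, f₂ : K → ℝ be m-strongly convex functions, let x₁* be a minimizer of f₁ over K and x₂* a minimizer of f₂ over K, and suppose the difference d := f₁ − f₂ is L-Lipschitz on K. Then m ‖x₁* − x₂*‖² ≤ |d(x₂*) − d(x₁*)| ≤ L ‖x₁* − x₂*‖, and consequently ‖x₁* − x₂*‖ ≤ L/m. -/
noncomputable section

/-- Quadratic growth at a minimizer of a strongly convex function. -/
lemma quad_growth_aux {E : Type*} [NormedAddCommGroup E] [InnerProductSpace ℝ E]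
    (Ks : Set E) (m : ℝ) (hm : 0 < m) (f : E → ℝ)
    (hsc : ConvexOn ℝ Ks (fun x => f x - m / 2 * ‖x‖ ^ 2))
    (x₀ : E) (hx₀ : x₀ ∈ Ks) (hmin : ∀ x ∈ Ks, f x₀ ≤ f x)
    (x : E) (hx : x ∈ Ks) :
    m / 2 * ‖x - x₀‖ ^ 2 ≤ f x - f x₀ := by
  have hstrong : StrongConvexOn Ks m f := strongConvexOn_iff_convex.mpr hsc
  set C : ℝ := m / 2 * ‖x - x₀‖ ^ 2 with hC
  have hC0 : 0 ≤ C := by positivity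
  refine le_of_forall_pos_le_add fun ε hε => ?_
  set t : ℝ := min (1/2) (ε / (C + 1)) with ht
  have ht0 : 0 < t := lt_min (by norm_num) (by positivity)
  have ht1 : t < 1 := lt_of_le_of_lt (min_le_left _ _) (by norm_num)
  have hconv := hstrong.2 hx hx₀ (le_of_lt ht0) (by linarith : (0:ℝ) ≤ 1 - t)
    (by ring)
  have hmid : f x₀ ≤ f (t • x + (1 - t) • x₀) :=
    hmin _ (hstrong.1 hx hx₀ (le_of_lt ht0) (by linarith) (by ring))
  have key : t * (1 - t) * C ≤ t * (f x - f x₀) := by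
    have h := hmid.trans hconv
    simp only [smul_eq_mul] at h
    rw [hC]
    nlinarith [h]
  have h1 : (1 - t) * C ≤ f x - f x₀ := by
    have := (mul_le_mul_iff_right₀ ht0).mp (by linarith [key] : t * ((1 - t) * C) ≤ t * (f x - f x₀))
    exact this
  have htC : t * C ≤ ε := by
    have h2 : t ≤ ε / (C + 1) := min_le_right _ _
    have : t * C ≤ (ε / (C + 1)) * C := by
      exact mul_le_mul_of_nonneg_right h2 hC0
    calc t * C ≤ (ε / (C + 1)) * C := this
      _ ≤ ε := by
          rw [div_mul_eq_mul_div, div_le_iff₀ (by positivity)]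
          nlinarith
  linarith

/-- if `f₁, f₂ : K → ℝ` are `m`-strongly convex, `x₁*` minimizes `f₁` over
`K`, `x₂*` minimizes `f₂` over `K`, and `d = f₁ − f₂` is `L`-Lipschitz on `K`, then
`m ‖x₁* − x₂*‖² ≤ |d(x₂*) − d(x₁*)| ≤ L ‖x₁* − x₂*‖`, and so `‖x₁* − x₂*‖ ≤ L/m`.
(Following the context, `g` is `m`-strongly convex on `K` iff `x ↦ g(x) − (m/2)‖x‖²` is
convex on `K`.) -/
theorem strongly_convex_minimizer_stability
    {E : Type*} [NormedAddCommGroup E] [InnerProductSpace ℝ E] [FiniteDimensional ℝ E]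
    (Ks : Set E) (hKne : Ks.Nonempty) (hKconv : Convex ℝ Ks)
    (m L : ℝ) (hm : 0 < m) (hL : 0 ≤ L)
    (f₁ f₂ : E → ℝ)
    (hsc1 : ConvexOn ℝ Ks (fun x => f₁ x - m / 2 * ‖x‖ ^ 2))
    (hsc2 : ConvexOn ℝ Ks (fun x => f₂ x - m / 2 * ‖x‖ ^ 2))
    (x₁ x₂ : E) (hx₁ : x₁ ∈ Ks) (hx₂ : x₂ ∈ Ks)
    (hmin1 : ∀ x ∈ Ks, f₁ x₁ ≤ f₁ x)
    (hmin2 : ∀ x ∈ Ks, f₂ x₂ ≤ f₂ x)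
    (hlip : ∀ x ∈ Ks, ∀ y ∈ Ks, |(f₁ x - f₂ x) - (f₁ y - f₂ y)| ≤ L * ‖x - y‖) :
    m * ‖x₁ - x₂‖ ^ 2 ≤ |(f₁ x₂ - f₂ x₂) - (f₁ x₁ - f₂ x₁)| ∧
    |(f₁ x₂ - f₂ x₂) - (f₁ x₁ - f₂ x₁)| ≤ L * ‖x₁ - x₂‖ ∧
    ‖x₁ - x₂‖ ≤ L / m := by
  have h1 := quad_growth_aux Ks m hm f₁ hsc1 x₁ hx₁ hmin1 x₂ hx₂
  have h2 := quad_growth_aux Ks m hm f₂ hsc2 x₂ hx₂ hmin2 x₁ hx₁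
  have hnorm : ‖x₂ - x₁‖ = ‖x₁ - x₂‖ := norm_sub_rev _ _
  have hlow : m * ‖x₁ - x₂‖ ^ 2 ≤ (f₁ x₂ - f₂ x₂) - (f₁ x₁ - f₂ x₁) := by
    rw [hnorm] at h1
    nlinarith
  have habs_low : m * ‖x₁ - x₂‖ ^ 2 ≤ |(f₁ x₂ - f₂ x₂) - (f₁ x₁ - f₂ x₁)| :=
    hlow.trans (le_abs_self _)
  have habs_up : |(f₁ x₂ - f₂ x₂) - (f₁ x₁ - f₂ x₁)| ≤ L * ‖x₁ - x₂‖ := by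
    have := hlip x₂ hx₂ x₁ hx₁
    rwa [hnorm] at this
  refine ⟨habs_low, habs_up, ?_⟩
  have hquad : m * ‖x₁ - x₂‖ ^ 2 ≤ L * ‖x₁ - x₂‖ := habs_low.trans habs_up
  rcases eq_or_lt_of_le (norm_nonneg (x₁ - x₂)) with h0 | h0
  · rw [← h0]; positivity
  · rw [le_div_iff₀ hm]
    nlinarith
end
end

section
/- There exists a constant c > 0, depending only on λ, m₂ and the norm bounds of V, H, R and C (but not on t or on the particular sequences), such that ‖W_{t+1} − W_t‖_F ≤ c/(t+1) for all t ≥ 1. -/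
open MeasureTheory ProbabilityTheory Filter
open scoped BigOperators

noncomputable section

/-- Vectors in `ℝ^n` with the Euclidean (`ℓ₂`) norm. -/
abbrev Vec (n : ℕ) := EuclideanSpace ℝ (Fin n)

/-- `F × K` real matrices, normed with the Frobenius norm (Euclidean norm on entries). -/
abbrev Mat (F K : ℕ) := EuclideanSpace ℝ (Fin F × Fin K)

/-- Matrix-vector product `W h`. -/
def matVec {F K : ℕ} (W : Mat F K) (h : Vec K) : Vec F :=
  (WithLp.equiv 2 _).symm (fun i => ∑ j, W (i, j) * h j)

/-- The `ℓ₁` norm of a vector. -/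
def l1norm {n : ℕ} (v : Vec n) : ℝ := ∑ i, |v i|

/-- The constraint set `C`: nonnegative matrices whose columns have Euclidean norm at most 1. -/
def Cset (F K : ℕ) : Set (Mat F K) :=
  {W | (∀ p, 0 ≤ W p) ∧ ∀ j : Fin K, Real.sqrt (∑ i, (W (i, j))^2) ≤ 1}

/-- The constraint set `R = {r : ‖r‖_∞ ≤ M}`. -/
def Rset (F : ℕ) (M : ℝ) : Set (Vec F) := {r | ∀ i, |r i| ≤ M}

/-- `ℓ̃(v, W, h, r) = (1/2) ‖v − W h − r‖₂² + λ ‖r‖₁`. -/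
def elltilde {F K : ℕ} (lam : ℝ) (v : Vec F) (W : Mat F K) (h : Vec K) (r : Vec F) : ℝ :=
  (1/2) * ‖v - matVec W h - r‖^2 + lam * l1norm r

/-- `ℓ(v, W) = min_{(h,r) ∈ H × R} ℓ̃(v, W, h, r)`. -/
def ell {F K : ℕ} (lam : ℝ) (Hs : Set (Vec K)) (Rs : Set (Vec F)) (v : Vec F) (W : Mat F K) : ℝ :=
  sInf ((fun p : Vec K × Vec F => elltilde lam v W p.1 p.2) '' (Hs ×ˢ Rs))

/-- The surrogate `f̃_t(W) = (1/t) ∑_{i=1}^t [(1/2)‖v_i − W h_i − r_i‖₂² + λ‖r_i‖₁]`. -/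
def ftilde {F K : ℕ} (lam : ℝ) (v : ℕ → Vec F) (h : ℕ → Vec K) (r : ℕ → Vec F)
    (t : ℕ) (W : Mat F K) : ℝ :=
  (t : ℝ)⁻¹ * ∑ i ∈ Finset.Icc 1 t, ((1/2) * ‖v i - matVec W (h i) - r i‖^2 + lam * l1norm (r i))

/-- The empirical loss `f_t(W) = (1/t) ∑_{i=1}^t ℓ(v_i, W)`. -/
def femp {F K : ℕ} (lam : ℝ) (Hs : Set (Vec K)) (Rs : Set (Vec F)) (v : ℕ → Vec F)
    (t : ℕ) (W : Mat F K) : ℝ :=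
  (t : ℝ)⁻¹ * ∑ i ∈ Finset.Icc 1 t, ell lam Hs Rs (v i) W

/- ## Auxiliary lemmas -/

lemma matVec_sub' {F K : ℕ} (W W' : Mat F K) (h : Vec K) :
    matVec (W - W') h = matVec W h - matVec W' h := by
  ext i
  simp [matVec, Finset.sum_sub_distrib, sub_mul]

lemma norm_sq_eucl {n : Type*} [Fintype n] (x : EuclideanSpace ℝ n) :
    ‖x‖^2 = ∑ i, (x i)^2 := by
  rw [EuclideanSpace.norm_eq, Real.sq_sqrt (by positivity)]
  simp [Real.norm_eq_abs, sq_abs]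

lemma matVec_norm_le {F K : ℕ} (W : Mat F K) (h : Vec K) :
    ‖matVec W h‖ ≤ ‖W‖ * ‖h‖ := by
  have h2 : ‖matVec W h‖^2 ≤ (‖W‖ * ‖h‖)^2 := by
    rw [norm_sq_eucl, mul_pow, norm_sq_eucl, norm_sq_eucl]
    have key : ∀ i : Fin F, (matVec W h i)^2 ≤ (∑ j, (W (i,j))^2) * ∑ j, (h j)^2 := by
      intro i
      have := Finset.sum_mul_sq_le_sq_mul_sq Finset.univ (fun j => W (i,j)) (fun j => h j)
      simpa [matVec] using this
    calc ∑ i, (matVec W h i)^2 ≤ ∑ i, (∑ j, (W (i,j))^2) * ∑ j, (h j)^2 :=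
          Finset.sum_le_sum fun i _ => key i
      _ = (∑ p : Fin F × Fin K, (W p)^2) * ∑ j, (h j)^2 := by
          rw [← Finset.sum_mul, Fintype.sum_prod_type]
  have h3 : (0:ℝ) ≤ ‖W‖ * ‖h‖ := by positivity
  nlinarith [norm_nonneg (matVec W h)]

lemma Cset_norm_le {F K : ℕ} {W : Mat F K} (hW : W ∈ Cset F K) :
    ‖W‖ ≤ Real.sqrt K := by
  have h2 : ‖W‖^2 ≤ (K : ℝ) := by
    rw [norm_sq_eucl, Fintype.sum_prod_type_right]
    calc ∑ j : Fin K, ∑ i, (W (i,j))^2 ≤ ∑ _j : Fin K, (1:ℝ) := by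
          refine Finset.sum_le_sum fun j _ => ?_
          have h1 := hW.2 j
          have h0 : (0:ℝ) ≤ ∑ i, (W (i,j))^2 := by positivity
          nlinarith [Real.sq_sqrt h0, Real.sqrt_nonneg (∑ i, (W (i,j))^2)]
      _ = (K : ℝ) := by simp
  calc ‖W‖ = Real.sqrt (‖W‖^2) := by rw [Real.sqrt_sq (norm_nonneg _)]
    _ ≤ Real.sqrt K := Real.sqrt_le_sqrt h2

lemma quad_lip {F K : ℕ} (a : Vec F) (h : Vec K) (W W' : Mat F K) (B : ℝ)
    (h1 : ‖a - matVec W h‖ ≤ B) (h2 : ‖a - matVec W' h‖ ≤ B) :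
    (1/2)*‖a - matVec W h‖^2 - (1/2)*‖a - matVec W' h‖^2 ≤ B * ‖h‖ * ‖W - W'‖ := by
  have hrev : ‖a - matVec W h‖ - ‖a - matVec W' h‖ ≤ ‖h‖ * ‖W - W'‖ := by
    have := norm_sub_norm_le (a - matVec W h) (a - matVec W' h)
    have e : (a - matVec W h) - (a - matVec W' h) = matVec (W' - W) h := by
      rw [matVec_sub']; abel
    rw [e] at this
    calc ‖a - matVec W h‖ - ‖a - matVec W' h‖ ≤ ‖matVec (W' - W) h‖ := this
      _ ≤ ‖W' - W‖ * ‖h‖ := matVec_norm_le _ _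
      _ = ‖h‖ * ‖W - W'‖ := by rw [norm_sub_rev]; ring
  nlinarith [norm_nonneg (a - matVec W h), norm_nonneg (a - matVec W' h),
    norm_nonneg h, norm_nonneg (W - W'), mul_nonneg (norm_nonneg h) (norm_nonneg (W - W'))]

def qfun {F K : ℕ} (lam : ℝ) (v : ℕ → Vec F) (h : ℕ → Vec K) (r : ℕ → Vec F)
    (i : ℕ) (X : Mat F K) : ℝ :=
  (1/2) * ‖v i - matVec X (h i) - r i‖^2 + lam * l1norm (r i)

lemma ftilde_eq {F K : ℕ} (lam : ℝ) (v : ℕ → Vec F) (h : ℕ → Vec K) (r : ℕ → Vec F)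
    (n : ℕ) (X : Mat F K) :
    ftilde lam v h r n X = (n : ℝ)⁻¹ * ∑ i ∈ Finset.Icc 1 n, qfun lam v h r i X := rfl

lemma strong_min {E : Type*} [NormedAddCommGroup E] [InnerProductSpace ℝ E]
    {s : Set E} {f : E → ℝ} {m : ℝ} (hm : 0 < m)
    (hc : ConvexOn ℝ s (fun x => f x - m / 2 * ‖x‖^2))
    {x : E} (hx : x ∈ s) (hmin : ∀ z ∈ s, f x ≤ f z)
    {y : E} (hy : y ∈ s) :
    f x + m / 2 * ‖y - x‖^2 ≤ f y := by
  set d := ‖y - x‖^2 with hd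
  have hd0 : 0 ≤ d := sq_nonneg _
  have key : ∀ a : ℝ, 0 < a → a ≤ 1 → f x + m / 2 * (1 - a) * d ≤ f y := by
    intro a ha ha1
    have hb : (0:ℝ) ≤ 1 - a := by linarith
    have hmem := hc.1 hy hx (le_of_lt ha) hb (by ring)
    have hcone := hc.2 hy hx (le_of_lt ha) hb (by ring)
    have hmin' := hmin _ hmem
    have hnz : ‖a • y + (1 - a) • x‖^2
        = a^2 * ‖y‖^2 + 2 * (a * (1-a)) * (inner ℝ y x : ℝ) + (1-a)^2 * ‖x‖^2 := by
      rw [norm_add_sq_real, norm_smul, norm_smul, real_inner_smul_left, real_inner_smul_right]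
      simp [Real.norm_eq_abs, abs_of_nonneg (le_of_lt ha), abs_of_nonneg hb]
      ring
    have hdz : d = ‖y‖^2 - 2 * (inner ℝ y x : ℝ) + ‖x‖^2 := by
      rw [hd, norm_sub_sq_real]
    have expand2 : m / 2 * (a * ‖y‖^2 + (1 - a) * ‖x‖^2 - ‖a • y + (1 - a) • x‖^2)
        = m / 2 * (a * (1 - a) * d) := by rw [hnz, hdz]; ring
    simp only [smul_eq_mul] at hcone
    have h5 : a * (f x + m / 2 * (1 - a) * d) ≤ a * f y := by linarith [hcone, hmin', expand2]
    exact le_of_mul_le_mul_left h5 ha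
  have hlim : ∀ ε > 0, f x + m / 2 * d ≤ f y + ε := by
    intro ε hε
    set a := min 1 (ε / (m / 2 * d + 1)) with haa
    have hden : 0 < m / 2 * d + 1 := by nlinarith
    have ha0 : 0 < a := lt_min one_pos (div_pos hε hden)
    have ha1 : a ≤ 1 := min_le_left _ _
    have h1 := key a ha0 ha1
    have h2 : a * (m / 2 * d) ≤ ε := by
      have hale : a ≤ ε / (m / 2 * d + 1) := min_le_right _ _
      have h3 : a * (m / 2 * d + 1) ≤ ε := by
        rw [← le_div_iff₀ hden]; linarith [hale]
      nlinarith
    nlinarith [h1, h2]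
  exact le_of_forall_pos_le_add hlim


/-- Lemma 2: there is a constant `c > 0`, depending only on `λ`, `m₂` and
the norm bounds of `V`, `H`, `R` and `C` (not on `t` or on the particular sequences), such
that `‖W_{t+1} − W_t‖_F ≤ c/(t+1)` for all `t ≥ 1`. -/
theorem dictionary_iterates_slowly_varying
    (F K : ℕ) (hF : 1 ≤ F) (hK : 1 ≤ K)
    (lam : ℝ) (hlam : 0 < lam)
    (Vs : Set (Vec F)) (Hs : Set (Vec K)) (Rs : Set (Vec F))
    (hVb : Bornology.IsBounded Vs) (hHb : Bornology.IsBounded Hs)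
    (hRb : Bornology.IsBounded Rs)
    (m₂ : ℝ) (hm₂ : 0 < m₂) :
    ∃ c : ℝ, 0 < c ∧
      ∀ (v : ℕ → Vec F) (h : ℕ → Vec K) (r : ℕ → Vec F) (W : ℕ → Mat F K),
        (∀ i, 1 ≤ i → v i ∈ Vs) → (∀ i, 1 ≤ i → h i ∈ Hs) → (∀ i, 1 ≤ i → r i ∈ Rs) →
        -- every f̃_t is m₂-strongly convex on C
        (∀ t, 1 ≤ t →
          ConvexOn ℝ (Cset F K) (fun Wm => ftilde lam v h r t Wm - m₂ / 2 * ‖Wm‖^2)) →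
        -- W_t minimizes f̃_t over C
        (∀ t, 1 ≤ t → W t ∈ Cset F K ∧
          ∀ W' ∈ Cset F K, ftilde lam v h r t (W t) ≤ ftilde lam v h r t W') →
        ∀ t, 1 ≤ t → ‖W (t+1) - W t‖ ≤ c / (t+1) := by
  obtain ⟨BV, hBV⟩ := isBounded_iff_forall_norm_le.1 hVb
  obtain ⟨BH, hBH⟩ := isBounded_iff_forall_norm_le.1 hHb
  obtain ⟨BR, hBR⟩ := isBounded_iff_forall_norm_le.1 hRb
  set BV' : ℝ := max BV 0 with hBV'
  set BH' : ℝ := max BH 0 with hBH'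
  set BR' : ℝ := max BR 0 with hBR'
  have hBV0 : 0 ≤ BV' := le_max_right _ _
  have hBH0 : 0 ≤ BH' := le_max_right _ _
  have hBR0 : 0 ≤ BR' := le_max_right _ _
  set B : ℝ := BV' + Real.sqrt K * BH' + BR' with hBdef
  have hB0 : 0 ≤ B := by positivity
  set L : ℝ := BH' * B with hLdef
  have hL0 : 0 ≤ L := by positivity
  set c : ℝ := max 1 (2 * L / m₂) with hcdef
  have hc0 : (0:ℝ) < c := lt_of_lt_of_le one_pos (le_max_left _ _)
  refine ⟨c, hc0, ?_⟩
  intro v h r W hv hh hr hconv hmin t ht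
  obtain ⟨hW1C, hW1min⟩ := hmin t ht
  obtain ⟨hW2C, hW2min⟩ := hmin (t+1) (by omega)
  set W1 := W t with hW1
  set W2 := W (t+1) with hW2
  set d : ℝ := ‖W2 - W1‖ with hddef
  have hd0 : 0 ≤ d := norm_nonneg _
  have hT1 : (1:ℝ) ≤ (t:ℝ) := by exact_mod_cast ht
  have hT0 : (0:ℝ) < (t:ℝ) := by linarith
  have hT10 : (0:ℝ) < (t:ℝ) + 1 := by linarith
  -- residual bound
  have hres : ∀ W' ∈ Cset F K,
      ‖(v (t+1) - r (t+1)) - matVec W' (h (t+1))‖ ≤ B := by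
    intro W' hW'
    have h1 : ‖v (t+1) - r (t+1)‖ ≤ BV' + BR' := by
      calc ‖v (t+1) - r (t+1)‖ ≤ ‖v (t+1)‖ + ‖r (t+1)‖ := norm_sub_le _ _
        _ ≤ BV' + BR' := add_le_add
            ((hBV _ (hv (t+1) (by omega))).trans (le_max_left _ _))
            ((hBR _ (hr (t+1) (by omega))).trans (le_max_left _ _))
    have h2 : ‖matVec W' (h (t+1))‖ ≤ Real.sqrt K * BH' := by
      calc ‖matVec W' (h (t+1))‖ ≤ ‖W'‖ * ‖h (t+1)‖ := matVec_norm_le _ _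
        _ ≤ Real.sqrt K * BH' := mul_le_mul (Cset_norm_le hW')
            ((hBH _ (hh (t+1) (by omega))).trans (le_max_left _ _))
            (norm_nonneg _) (Real.sqrt_nonneg _)
    calc ‖(v (t+1) - r (t+1)) - matVec W' (h (t+1))‖
        ≤ ‖v (t+1) - r (t+1)‖ + ‖matVec W' (h (t+1))‖ := norm_sub_le _ _
      _ ≤ B := by rw [hBdef]; linarith
  have hsum : ∀ X : Mat F K,
      ∑ i ∈ Finset.Icc 1 (t+1), qfun lam v h r i X
        = (∑ i ∈ Finset.Icc 1 t, qfun lam v h r i X) + qfun lam v h r (t+1) X :=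
    fun X => Finset.sum_Icc_succ_top (by omega) _
  -- strong convexity inequalities
  have hA := strong_min hm₂ (hconv t ht) hW1C hW1min hW2C
  have hB2 := strong_min hm₂ (hconv (t+1) (by omega)) hW2C hW2min hW1C
  rw [ftilde_eq, ftilde_eq] at hA hB2
  rw [norm_sub_rev, hsum, hsum] at hB2
  have hTn1 : ((t+1 : ℕ) : ℝ) = (t:ℝ) + 1 := by push_cast; ring
  rw [hTn1] at hB2
  -- clear denominators
  have hA' : (∑ i ∈ Finset.Icc 1 t, qfun lam v h r i W1) + (t:ℝ) * (m₂ / 2 * d ^ 2)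
      ≤ ∑ i ∈ Finset.Icc 1 t, qfun lam v h r i W2 := by
    have h0 := mul_le_mul_of_nonneg_left hA hT0.le
    rw [mul_add, mul_inv_cancel_left₀ hT0.ne', mul_inv_cancel_left₀ hT0.ne'] at h0
    linarith
  have hB2' : ((∑ i ∈ Finset.Icc 1 t, qfun lam v h r i W2) + qfun lam v h r (t+1) W2)
      + ((t:ℝ) + 1) * (m₂ / 2 * d ^ 2)
      ≤ (∑ i ∈ Finset.Icc 1 t, qfun lam v h r i W1) + qfun lam v h r (t+1) W1 := by
    have h0 := mul_le_mul_of_nonneg_left hB2 hT10.le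
    rw [mul_add, mul_inv_cancel_left₀ hT10.ne', mul_inv_cancel_left₀ hT10.ne'] at h0
    linarith
  have hkey : (2*(t:ℝ) + 1) * (m₂ / 2) * d ^ 2
      ≤ qfun lam v h r (t+1) W1 - qfun lam v h r (t+1) W2 := by linarith
  -- Lipschitz bound on qfun (t+1)
  have hlip : qfun lam v h r (t+1) W1 - qfun lam v h r (t+1) W2 ≤ L * d := by
    have e : ∀ X : Mat F K, v (t+1) - matVec X (h (t+1)) - r (t+1)
        = (v (t+1) - r (t+1)) - matVec X (h (t+1)) := fun X => by abel
    have hq1 := quad_lip (v (t+1) - r (t+1)) (h (t+1)) W1 W2 B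
      (hres W1 hW1C) (hres W2 hW2C)
    have hhb : ‖h (t+1)‖ ≤ BH' := (hBH _ (hh (t+1) (by omega))).trans (le_max_left _ _)
    have h3 : B * ‖h (t+1)‖ * ‖W1 - W2‖ ≤ L * d := by
      rw [hLdef, hddef, norm_sub_rev W2 W1]
      have := mul_le_mul_of_nonneg_left hhb hB0
      nlinarith [norm_nonneg (W1 - W2)]
    calc qfun lam v h r (t+1) W1 - qfun lam v h r (t+1) W2
        = (1/2)*‖(v (t+1) - r (t+1)) - matVec W1 (h (t+1))‖^2
          - (1/2)*‖(v (t+1) - r (t+1)) - matVec W2 (h (t+1))‖^2 := by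
          simp only [qfun]; rw [e W1, e W2]; ring
      _ ≤ B * ‖h (t+1)‖ * ‖W1 - W2‖ := hq1
      _ ≤ L * d := h3
  -- conclude
  have hmain : (2*(t:ℝ) + 1) * (m₂ / 2) * d ^ 2 ≤ L * d := le_trans hkey hlip
  show d ≤ c / ((t:ℝ) + 1)
  rcases hd0.lt_or_eq with hdpos | hdzero
  · have e1 : ((t:ℝ)+1) * (m₂ / 2) * d ^ 2 ≤ (2*(t:ℝ) + 1) * (m₂ / 2) * d ^ 2 :=
      mul_le_mul_of_nonneg_right
        (mul_le_mul_of_nonneg_right (by linarith) (by linarith)) (sq_nonneg d)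
    have e2 : (((t:ℝ)+1) * (m₂ / 2) * d) * d ≤ L * d := by
      calc (((t:ℝ)+1) * (m₂ / 2) * d) * d = ((t:ℝ)+1) * (m₂ / 2) * d ^ 2 := by ring
        _ ≤ L * d := le_trans e1 hmain
    have e3 : ((t:ℝ)+1) * (m₂ / 2) * d ≤ L := le_of_mul_le_mul_right e2 hdpos
    have h1 : d * (((t:ℝ)+1) * m₂) ≤ 2 * L := by linarith
    have h2 : d ≤ 2 * L / m₂ / ((t:ℝ) + 1) := by
      rw [div_div, le_div_iff₀ (by positivity)]
      calc d * (m₂ * ((t:ℝ)+1)) = d * (((t:ℝ)+1) * m₂) := by ring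
        _ ≤ 2 * L := h1
    calc d ≤ 2 * L / m₂ / ((t:ℝ) + 1) := h2
      _ ≤ c / ((t:ℝ) + 1) := by
          exact (div_le_div_iff_of_pos_right hT10).2 (le_max_right 1 (2 * L / m₂))
  · have hpos : (0:ℝ) < c / ((t:ℝ) + 1) := div_pos hc0 hT10
    linarith
end
end
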